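/- arXiv:2212.08963 — 4 statements merged into one kernel-verified Lean document; each statement's English description precedes it below -/
import Mathlib

section
/- Let q be a prime power and, for t ≥ 1, let R^*(t) = Σ_G 1/q^{deg G}, the sum over all squarefree monic polynomials G ∈ F_q[X] not divisible by X with ord(G) ≤ t. Then R^*(t) = o(t) as t → ∞; in fact R^*(t) = O(log t). -/
open Polynomial Filter

/-- The order of a polynomial `F ∈ F_q[X]` not divisible by `X`:
the least `j > 0` such that `F ∣ X^j - 1`. -/
noncomputable def polyOrd {Fq : Type*} [Field Fq] (F : Polynomial Fq) : ℕ :=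
  sInf {j : ℕ | 0 < j ∧ F ∣ Polynomial.X ^ j - 1}

set_option linter.unusedSectionVars false
set_option linter.unusedVariables false
open Polynomial Filter


variable {K : Type} [Field K] [Fintype K]

lemma finite_natDegree_le (n : ℕ) : {p : K[X] | p.natDegree ≤ n}.Finite := by
  have hinj : Set.InjOn (fun p : K[X] => fun i : Fin (n+1) => p.coeff i)
      {p | p.natDegree ≤ n} := by
    intro p hp r hr h
    ext i
    by_cases hi : i ≤ n
    · exact congrFun h ⟨i, Nat.lt_succ_of_le hi⟩
    · rw [coeff_eq_zero_of_natDegree_lt, coeff_eq_zero_of_natDegree_lt]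
      · exact lt_of_le_of_lt hr (by omega)
      · exact lt_of_le_of_lt hp (by omega)
  exact Set.Finite.of_finite_image (Set.toFinite _) hinj

lemma exists_dvd_X_pow_sub_one (G : K[X]) (hG : G.Monic) (hX : ¬ (X : K[X]) ∣ G) :
    ∃ j, 0 < j ∧ G ∣ X ^ j - 1 := by
  by_cases h0 : G.natDegree = 0
  · have h1 : G = 1 := hG.natDegree_eq_zero.mp h0
    exact ⟨1, one_pos, by rw [h1]; exact one_dvd _⟩
  · have hG0 : G ≠ 0 := hG.ne_zero
    have hfin : Module.Finite K (AdjoinRoot G) := (AdjoinRoot.powerBasis hG0).finite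
    have : Finite (AdjoinRoot G) := Module.finite_of_finite K
    have hcop : IsCoprime (X : K[X]) G :=
      (Polynomial.irreducible_X).coprime_iff_not_dvd.mpr hX
    obtain ⟨a, b, hab⟩ := hcop
    have hx : IsUnit (AdjoinRoot.mk G X) := by
      apply IsUnit.of_mul_eq_one (AdjoinRoot.mk G a)
      have := congrArg (AdjoinRoot.mk G) hab
      simp only [map_add, map_mul, AdjoinRoot.mk_self, mul_zero, add_zero, map_one] at this
      rw [mul_comm]; simpa using this
    obtain ⟨u, hu⟩ := hx
    haveI : Fintype (AdjoinRoot G)ˣ := Fintype.ofFinite _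
    refine ⟨Fintype.card (AdjoinRoot G)ˣ, Fintype.card_pos, ?_⟩
    rw [← AdjoinRoot.mk_eq_zero, map_sub, map_pow, map_one, ← hu, ← Units.val_pow_eq_pow_val,
      pow_card_eq_one, Units.val_one, sub_self]

lemma polyOrd_spec (G : K[X]) (hG : G.Monic) (hX : ¬ (X : K[X]) ∣ G) :
    0 < polyOrd G ∧ G ∣ X ^ polyOrd G - 1 := by
  obtain ⟨j, hj⟩ := exists_dvd_X_pow_sub_one G hG hX
  exact Nat.sInf_mem (⟨j, hj⟩ : {j : ℕ | 0 < j ∧ G ∣ X ^ j - 1}.Nonempty)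

lemma polyOrd_le {G : K[X]} {j : ℕ} (hj : 0 < j) (h : G ∣ X ^ j - 1) : polyOrd G ≤ j :=
  Nat.sInf_le ⟨hj, h⟩

lemma natDegree_le_of_dvd_X_pow_sub_one {G : K[X]} (hG0 : G ≠ 0) {j : ℕ} (hj : 0 < j)
    (h : G ∣ X ^ j - 1) : G.natDegree ≤ j := by
  have h1 : ((X : K[X]) ^ j - 1) = X ^ j - C 1 := by rw [map_one]
  have hne : ((X : K[X]) ^ j - 1) ≠ 0 := by
    rw [h1]; exact (monic_X_pow_sub_C (1 : K) hj.ne').ne_zero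
  have := Polynomial.natDegree_le_of_dvd h hne
  rwa [h1, natDegree_X_pow_sub_C] at this

lemma natDegree_le_polyOrd (G : K[X]) (hG : G.Monic) (hX : ¬ (X : K[X]) ∣ G) :
    G.natDegree ≤ polyOrd G := by
  obtain ⟨hpos, hdvd⟩ := polyOrd_spec G hG hX
  exact natDegree_le_of_dvd_X_pow_sub_one hG.ne_zero hpos hdvd

lemma prod_distinct_irred_dvd {S : Finset K[X]} (hmon : ∀ p ∈ S, p.Monic)
    (hirr : ∀ p ∈ S, Irreducible p) {M : K[X]} (hdvd : ∀ p ∈ S, p ∣ M) :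
    ∏ p ∈ S, p ∣ M := by
  classical
  induction S using Finset.induction with
  | empty => simpa using one_dvd M
  | @insert a s ha ih =>
    rw [Finset.prod_insert ha]
    have hcop : IsCoprime a (∏ p ∈ s, p) := by
      apply IsCoprime.prod_right
      intro b hb
      apply ((hirr a (Finset.mem_insert_self a s)).coprime_iff_not_dvd).mpr
      intro hab
      have hassoc := (hirr a (Finset.mem_insert_self a s)).associated_of_dvd
        (hirr b (Finset.mem_insert_of_mem hb)) hab
      have : a = b := Polynomial.eq_of_monic_of_associated
        (hmon a (Finset.mem_insert_self a s)) (hmon b (Finset.mem_insert_of_mem hb)) hassoc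
      exact ha (this ▸ hb)
    exact hcop.mul_dvd (hdvd a (Finset.mem_insert_self a s))
      (ih (fun p hp => hmon p (Finset.mem_insert_of_mem hp))
        (fun p hp => hirr p (Finset.mem_insert_of_mem hp))
        (fun p hp => hdvd p (Finset.mem_insert_of_mem hp)))

lemma sum_natDegree_le {S : Finset K[X]} (hmon : ∀ p ∈ S, p.Monic)
    (hirr : ∀ p ∈ S, Irreducible p) {M : K[X]} (hM : M ≠ 0) (hdvd : ∀ p ∈ S, p ∣ M) :
    ∑ p ∈ S, p.natDegree ≤ M.natDegree := by
  have h1 := Polynomial.natDegree_le_of_dvd (prod_distinct_irred_dvd hmon hirr hdvd) hM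
  rwa [Polynomial.natDegree_prod _ _ (fun p hp => (hmon p hp).ne_zero)] at h1

lemma irred_dvd_X_pow_card (P : K[X]) (hP : Irreducible P) :
    P ∣ X ^ (Fintype.card K ^ P.natDegree) - X := by
  haveI := Fact.mk hP
  have hfin : Module.Finite K (AdjoinRoot P) := (AdjoinRoot.powerBasis hP.ne_zero).finite
  have : Finite (AdjoinRoot P) := Module.finite_of_finite K
  haveI : Fintype (AdjoinRoot P) := Fintype.ofFinite _
  have hcard : Fintype.card (AdjoinRoot P) = Fintype.card K ^ P.natDegree := by
    rw [Module.card_eq_pow_finrank (K := K) (V := AdjoinRoot P),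
      (AdjoinRoot.powerBasis hP.ne_zero).finrank, AdjoinRoot.powerBasis_dim]
  rw [← AdjoinRoot.mk_eq_zero, map_sub, map_pow, AdjoinRoot.mk_X, ← hcard,
    FiniteField.pow_card, sub_self]

variable [DecidableEq K]

open UniqueFactorizationMonoid in
lemma exists_factor_finset {G : K[X]} (hsq : Squarefree G) (hmon : G.Monic) :
    ∀ P ∈ (normalizedFactors G).toFinset, (P.Monic ∧ Irreducible P ∧ P ∣ G) := by
  intro P hP
  rw [Multiset.mem_toFinset] at hP
  refine ⟨?_, irreducible_of_normalized_factor P hP, dvd_of_mem_normalizedFactors hP⟩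
  have hP0 : P ≠ 0 := (prime_of_normalized_factor P hP).ne_zero
  classical
  rw [← normalize_normalized_factor P hP]
  exact monic_normalize hP0

open UniqueFactorizationMonoid in
lemma prod_factor_finset {G : K[X]} (hsq : Squarefree G) (hmon : G.Monic) :
    ∏ P ∈ (normalizedFactors G).toFinset, P = G := by
  classical
  have hG0 : G ≠ 0 := hmon.ne_zero
  have hnd : (normalizedFactors G).Nodup := (squarefree_iff_nodup_normalizedFactors hG0).mp hsq
  have h1 : ∏ P ∈ (normalizedFactors G).toFinset, P = (normalizedFactors G).prod := by
    rw [Finset.prod_eq_multiset_prod, Multiset.toFinset_val, Multiset.dedup_eq_self.mpr hnd]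
    simp
  rw [h1]
  have hassoc : Associated (normalizedFactors G).prod G := prod_normalizedFactors hG0
  have hmonprod : ((normalizedFactors G).prod).Monic := by
    rw [← Multiset.map_id (normalizedFactors G)]
    apply monic_multiset_prod_of_monic
    simp only [id]
    intro P hP
    exact (exists_factor_finset hsq hmon P (Multiset.mem_toFinset.mpr hP)).1
  exact Polynomial.eq_of_monic_of_associated hmonprod hmon hassoc

lemma PSet_finite (T : ℕ) :
    {P : K[X] | Irreducible P ∧ P.Monic ∧ ¬ (X : K[X]) ∣ P ∧ polyOrd P ≤ T}.Finite := by
  apply (finite_natDegree_le T).subset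
  rintro P ⟨hi, hm, hx, ho⟩
  exact (natDegree_le_polyOrd P hm hx).trans ho

lemma GSet_finite (T : ℕ) :
    {G : K[X] | Squarefree G ∧ G.Monic ∧ ¬ (X : K[X]) ∣ G ∧ polyOrd G ≤ T}.Finite := by
  apply (finite_natDegree_le T).subset
  rintro G ⟨hs, hm, hx, ho⟩
  exact (natDegree_le_polyOrd G hm hx).trans ho

open UniqueFactorizationMonoid in
lemma key_bound (T : ℕ) (hT : 2 ≤ T) :
    ∑ G ∈ (GSet_finite (K := K) T).toFinset, (1 / (Fintype.card K : ℝ) ^ G.natDegree)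
      ≤ 64 * Real.log T := by
  classical
  set q : ℕ := Fintype.card K with hqdef
  have hq2 : 1 < q := Fintype.one_lt_card
  have hq2R : (1 : ℝ) < (q : ℝ) := by exact_mod_cast hq2
  set w : K[X] → ℝ := fun P => 1 / (q : ℝ) ^ P.natDegree with hwdef
  set PP : Finset K[X] := (PSet_finite (K := K) T).toFinset with hPdef
  set GG : Finset K[X] := (GSet_finite (K := K) T).toFinset with hGdef
  have hmemPP : ∀ P, P ∈ PP ↔ Irreducible P ∧ P.Monic ∧ ¬ (X : K[X]) ∣ P ∧ polyOrd P ≤ T := by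
    intro P; rw [hPdef, Set.Finite.mem_toFinset]; rfl
  have hmemGG : ∀ G, G ∈ GG ↔ Squarefree G ∧ G.Monic ∧ ¬ (X : K[X]) ∣ G ∧ polyOrd G ≤ T := by
    intro G; rw [hGdef, Set.Finite.mem_toFinset]; rfl
  set Φ : K[X] → Finset K[X] := fun G => (normalizedFactors G).toFinset with hΦdef
  -- facts about Φ on GG
  have hprodΦ : ∀ G ∈ GG, ∏ P ∈ Φ G, P = G := by
    intro G hG
    obtain ⟨hs, hm, -, -⟩ := (hmemGG G).mp hG
    exact prod_factor_finset hs hm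
  have hsubΦ : ∀ G ∈ GG, Φ G ⊆ PP := by
    intro G hG P hP
    obtain ⟨hs, hm, hx, ho⟩ := (hmemGG G).mp hG
    obtain ⟨hPm, hPi, hPdvd⟩ := exists_factor_finset hs hm P hP
    rw [hmemPP]
    refine ⟨hPi, hPm, fun hXP => hx (hXP.trans hPdvd), ?_⟩
    obtain ⟨hpos, hdvd⟩ := polyOrd_spec G hm hx
    exact (polyOrd_le hpos (hPdvd.trans hdvd)).trans ho
  have hwΦ : ∀ G ∈ GG, w G = ∏ P ∈ Φ G, w P := by
    intro G hG
    have hne : ∀ P ∈ Φ G, P ≠ (0 : K[X]) := by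
      intro P hP
      obtain ⟨hs, hm, -, -⟩ := (hmemGG G).mp hG
      exact (exists_factor_finset hs hm P hP).1.ne_zero
    have hdeg : G.natDegree = ∑ P ∈ Φ G, P.natDegree := by
      conv_lhs => rw [← hprodΦ G hG]
      rw [Polynomial.natDegree_prod _ _ hne]
    rw [hwdef]
    simp only
    rw [hdeg, Finset.prod_div_distrib, Finset.prod_const_one, Finset.prod_pow_eq_pow_sum]
  -- Step A
  have hstepA : ∑ G ∈ GG, w G ≤ ∏ P ∈ PP, (w P + 1) := by
    have hinj : ∀ G₁ ∈ GG, ∀ G₂ ∈ GG, Φ G₁ = Φ G₂ → G₁ = G₂ := by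
      intro G₁ h₁ G₂ h₂ h
      rw [← hprodΦ G₁ h₁, ← hprodΦ G₂ h₂, h]
    have h1 : ∑ G ∈ GG, w G = ∑ A ∈ GG.image Φ, ∏ P ∈ A, w P := by
      rw [Finset.sum_image hinj]
      exact Finset.sum_congr rfl hwΦ
    have h2 : GG.image Φ ⊆ PP.powerset := by
      intro A hA
      obtain ⟨G, hG, rfl⟩ := Finset.mem_image.mp hA
      exact Finset.mem_powerset.mpr (hsubΦ G hG)
    have h3 : ∑ A ∈ GG.image Φ, ∏ P ∈ A, w P ≤ ∑ A ∈ PP.powerset, ∏ P ∈ A, w P := by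
      apply Finset.sum_le_sum_of_subset_of_nonneg h2
      intro A _ _
      apply Finset.prod_nonneg
      intro P _
      positivity
    have h4 : ∏ P ∈ PP, (w P + 1) = ∑ A ∈ PP.powerset, ∏ P ∈ A, w P := by
      rw [Finset.prod_add]
      exact Finset.sum_congr rfl (fun A hA => by simp)
    rw [h1, h4]; exact h3
  -- Step B
  have hstepB : ∏ P ∈ PP, (w P + 1) ≤ Real.exp (∑ P ∈ PP, w P) := by
    rw [Real.exp_sum]
    apply Finset.prod_le_prod
    · intro P _; positivity
    · intro P _
      have := Real.add_one_le_exp (w P)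
      linarith
  -- basic facts about PP
  have hdeg1 : ∀ P ∈ PP, 1 ≤ P.natDegree := by
    intro P hP
    exact ((hmemPP P).mp hP).1.natDegree_pos
  -- PP divides the big product M
  set M : K[X] := ∏ j ∈ Finset.Icc 1 T, ((X : K[X]) ^ j - 1) with hMdef
  have hfac_ne : ∀ j ∈ Finset.Icc 1 T, ((X : K[X]) ^ j - 1) ≠ 0 := by
    intro j hj
    have hj1 : j ≠ 0 := by
      have := (Finset.mem_Icc.mp hj).1; omega
    have : ((X : K[X]) ^ j - 1) = X ^ j - C 1 := by rw [map_one]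
    rw [this]
    exact (monic_X_pow_sub_C (1 : K) hj1).ne_zero
  have hM0 : M ≠ 0 := Finset.prod_ne_zero_iff.mpr hfac_ne
  have hMdeg : M.natDegree ≤ T * T := by
    rw [hMdef, Polynomial.natDegree_prod _ _ hfac_ne]
    calc ∑ j ∈ Finset.Icc 1 T, ((X : K[X]) ^ j - 1).natDegree
        = ∑ j ∈ Finset.Icc 1 T, j := by
          apply Finset.sum_congr rfl
          intro j hj
          rw [show ((X : K[X]) ^ j - 1) = X ^ j - C 1 by rw [map_one], natDegree_X_pow_sub_C]
      _ ≤ ∑ _j ∈ Finset.Icc 1 T, T := by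
          apply Finset.sum_le_sum
          intro j hj
          exact (Finset.mem_Icc.mp hj).2
      _ = T * T := by
          rw [Finset.sum_const, Nat.Icc_eq_range', smul_eq_mul]
          simp
  have hPdvdM : ∀ P ∈ PP, P ∣ M := by
    intro P hP
    obtain ⟨hi, hm, hx, ho⟩ := (hmemPP P).mp hP
    obtain ⟨hpos, hdvd⟩ := polyOrd_spec P hm hx
    refine hdvd.trans (Finset.dvd_prod_of_mem _ ?_)
    exact Finset.mem_Icc.mpr ⟨hpos, ho⟩
  have hsumdeg : ∑ P ∈ PP, P.natDegree ≤ T * T := by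
    refine (sum_natDegree_le ?_ ?_ hM0 hPdvdM).trans hMdeg
    · intro P hP; exact ((hmemPP P).mp hP).2.1
    · intro P hP; exact ((hmemPP P).mp hP).1
  have hcardPP : PP.card ≤ T * T := by
    calc PP.card = ∑ _P ∈ PP, 1 := by rw [Finset.sum_const, smul_eq_mul, mul_one]
      _ ≤ ∑ P ∈ PP, P.natDegree := Finset.sum_le_sum hdeg1
      _ ≤ T * T := hsumdeg
  -- the cutoff D
  set D : ℕ := Nat.clog q (T ^ 3) with hDdef
  have hT8 : 2 ≤ T ^ 3 := by nlinarith
  have hD1 : 1 ≤ D := Nat.clog_pos hq2 hT8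
  have hqD : T ^ 3 ≤ q ^ D := Nat.le_pow_clog hq2 _
  -- Step C : bound the sum of weights
  have hstepC : ∑ P ∈ PP, w P ≤ 2 + Real.log D := by
    rw [← Finset.sum_filter_add_sum_filter_not PP (fun P => P.natDegree ≤ D) w]
    have hhead : ∑ P ∈ PP.filter (fun P => P.natDegree ≤ D), w P ≤ 1 + Real.log D := by
      have hmaps : ∀ P ∈ PP.filter (fun P => P.natDegree ≤ D),
          P.natDegree ∈ Finset.Icc 1 D := by
        intro P hP
        rw [Finset.mem_filter] at hP
        exact Finset.mem_Icc.mpr ⟨hdeg1 P hP.1, hP.2⟩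
      rw [← Finset.sum_fiberwise_of_maps_to hmaps w]
      have hinner : ∀ d ∈ Finset.Icc 1 D,
          ∑ P ∈ (PP.filter (fun P => P.natDegree ≤ D)).filter
            (fun P => P.natDegree = d), w P ≤ 1 / (d : ℝ) := by
        intro d hd
        obtain ⟨hd1, hdD⟩ := Finset.mem_Icc.mp hd
        set Q : Finset K[X] := (PP.filter (fun P => P.natDegree ≤ D)).filter
          (fun P => P.natDegree = d) with hQdef
        have hQdeg : ∀ P ∈ Q, P.natDegree = d := by
          intro P hP
          exact (Finset.mem_filter.mp hP).2
        have hQPP : ∀ P ∈ Q, P ∈ PP := by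
          intro P hP
          exact (Finset.mem_filter.mp (Finset.mem_filter.mp hP).1).1
        -- degree-sum bound via X^(q^d) - X
        have hqd2 : 2 ≤ q ^ d := by
          calc 2 = 2 ^ 1 := rfl
            _ ≤ q ^ d := Nat.pow_le_pow_left hq2 1 |>.trans (Nat.pow_le_pow_right (by omega) hd1)
        have hMdeg' : ((X : K[X]) ^ (q ^ d) - X).natDegree = q ^ d := by
          rw [Polynomial.natDegree_sub_eq_left_of_natDegree_lt] <;>
            simp [Polynomial.natDegree_X_pow, Polynomial.natDegree_X] <;> omega
        have hM0' : ((X : K[X]) ^ (q ^ d) - X) ≠ 0 := by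
          intro h
          rw [h] at hMdeg'
          simp at hMdeg'
          omega
        have hQsum : ∑ P ∈ Q, P.natDegree ≤ q ^ d := by
          have := sum_natDegree_le (M := (X : K[X]) ^ (q ^ d) - X)
            (fun P hP => ((hmemPP P).mp (hQPP P hP)).2.1)
            (fun P hP => ((hmemPP P).mp (hQPP P hP)).1)
            hM0'
            (fun P hP => by
              have h1 := irred_dvd_X_pow_card P ((hmemPP P).mp (hQPP P hP)).1
              rwa [hQdeg P hP] at h1)
          rwa [hMdeg'] at this
        have hQcard : Q.card * d ≤ q ^ d := by
          calc Q.card * d = ∑ P ∈ Q, d := by rw [Finset.sum_const, smul_eq_mul, mul_comm]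
            _ = ∑ P ∈ Q, P.natDegree := Finset.sum_congr rfl (fun P hP => (hQdeg P hP).symm)
            _ ≤ q ^ d := hQsum
        have hconst : ∀ P ∈ Q, w P = 1 / (q : ℝ) ^ d := by
          intro P hP
          rw [hwdef]
          simp only
          rw [hQdeg P hP]
        rw [Finset.sum_congr rfl hconst, Finset.sum_const, nsmul_eq_mul, mul_one_div]
        rw [div_le_div_iff₀ (by positivity) (by exact_mod_cast hd1)]
        have : ((Q.card * d : ℕ) : ℝ) ≤ ((q ^ d : ℕ) : ℝ) := by exact_mod_cast hQcard
        push_cast at this ⊢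
        linarith
      calc ∑ d ∈ Finset.Icc 1 D, ∑ P ∈ (PP.filter (fun P => P.natDegree ≤ D)).filter
            (fun P => P.natDegree = d), w P
          ≤ ∑ d ∈ Finset.Icc 1 D, 1 / (d : ℝ) := Finset.sum_le_sum hinner
        _ = (harmonic D : ℝ) := by
            rw [harmonic_eq_sum_Icc]
            push_cast
            simp [one_div]
        _ ≤ 1 + Real.log D := harmonic_le_one_add_log D
    have htail : ∑ P ∈ PP.filter (fun P => ¬ P.natDegree ≤ D), w P ≤ 1 := by
      have hterm : ∀ P ∈ PP.filter (fun P => ¬ P.natDegree ≤ D), w P ≤ 1 / (q : ℝ) ^ D := by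
        intro P hP
        rw [Finset.mem_filter] at hP
        rw [hwdef]
        simp only
        apply one_div_le_one_div_of_le (by positivity)
        exact pow_le_pow_right₀ (le_of_lt hq2R) (by omega)
      calc ∑ P ∈ PP.filter (fun P => ¬ P.natDegree ≤ D), w P
          ≤ ∑ _P ∈ PP.filter (fun P => ¬ P.natDegree ≤ D), (1 / (q : ℝ) ^ D) :=
            Finset.sum_le_sum hterm
        _ = ((PP.filter (fun P => ¬ P.natDegree ≤ D)).card : ℝ) * (1 / (q : ℝ) ^ D) := by
            rw [Finset.sum_const, nsmul_eq_mul]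
        _ ≤ ((q : ℝ) ^ D) * (1 / (q : ℝ) ^ D) := by
            apply mul_le_mul_of_nonneg_right _ (by positivity)
            have h1 : (PP.filter (fun P => ¬ P.natDegree ≤ D)).card ≤ q ^ D := by
              calc (PP.filter (fun P => ¬ P.natDegree ≤ D)).card ≤ PP.card :=
                    Finset.card_le_card (Finset.filter_subset _ _)
                _ ≤ T * T := hcardPP
                _ ≤ T ^ 3 := by nlinarith
                _ ≤ q ^ D := hqD
            exact_mod_cast h1
        _ = 1 := by
            field_simp
    linarith
  -- Step D : conclude
  have hDpos : (0 : ℝ) < (D : ℝ) := by exact_mod_cast hD1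
  have hfinal : Real.exp (2 + Real.log D) = Real.exp 2 * D := by
    rw [Real.exp_add, Real.exp_log hDpos]
  have hexp2 : Real.exp 2 ≤ 8 := by
    have h1 := Real.exp_one_lt_d9
    have h2 : Real.exp 2 = Real.exp 1 * Real.exp 1 := by
      rw [← Real.exp_add]; norm_num
    nlinarith [Real.exp_pos 1]
  have hlogT : Real.log 2 ≤ Real.log T := by
    apply Real.log_le_log (by norm_num)
    exact_mod_cast hT
  have hlog2 : (0.6931471803 : ℝ) < Real.log 2 := Real.log_two_gt_d9
  have hD8 : (D : ℝ) ≤ 8 * Real.log T := by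
    have h1 : q ^ (D - 1) < T ^ 3 := by
      rw [hDdef]
      exact Nat.pow_pred_clog_lt_self hq2 (by omega)
    have h2 : 2 ^ (D - 1) ≤ T ^ 3 := le_of_lt (lt_of_le_of_lt (Nat.pow_le_pow_left hq2 _) h1)
    have h3 : ((2 : ℝ)) ^ (D - 1) ≤ ((T : ℝ)) ^ 3 := by exact_mod_cast h2
    have h4 : ((D - 1 : ℕ) : ℝ) * Real.log 2 ≤ 3 * Real.log T := by
      have h := Real.log_le_log (by positivity) h3
      rw [Real.log_pow, Real.log_pow] at h
      push_cast at h ⊢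
      linarith
    have h5 : ((D - 1 : ℕ) : ℝ) = (D : ℝ) - 1 := by
      rw [Nat.cast_sub hD1]; simp
    rw [h5] at h4
    nlinarith
  calc ∑ G ∈ GG, w G ≤ Real.exp (∑ P ∈ PP, w P) := hstepA.trans hstepB
    _ ≤ Real.exp (2 + Real.log D) := Real.exp_le_exp.mpr hstepC
    _ = Real.exp 2 * D := hfinal
    _ ≤ 8 * (8 * Real.log T) := by
        apply mul_le_mul hexp2 hD8 (le_of_lt hDpos) (by norm_num)
    _ = 64 * Real.log T := by ring


/-- **Growth of the truncated sum `R^*(t)`.**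
For `t ≥ 1` let `R(t) = ∑_G 1/q^{deg G}`, the sum over all squarefree monic
polynomials `G ∈ F_q[X]` not divisible by `X` with `ord(G) ≤ t`.  Then
`R(t) = o(t)` as `t → ∞`; in fact `R(t) = O(log t)`. -/
theorem R_star_growth
    (q : ℕ) (hq : ∃ p m : ℕ, p.Prime ∧ 0 < m ∧ q = p ^ m)
    (Fq : Type) [Field Fq] [Fintype Fq] (hcard : Fintype.card Fq = q)
    (R : ℝ → ℝ)
    (hR : ∀ t : ℝ, R t = ∑ᶠ G ∈ {G : Polynomial Fq | Squarefree G ∧ G.Monic ∧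
        ¬ (X : Polynomial Fq) ∣ G ∧ (polyOrd G : ℝ) ≤ t},
      1 / (q : ℝ) ^ G.natDegree) :
    Tendsto (fun t : ℝ => R t / t) atTop (nhds 0) ∧
      ∃ C : ℝ, 0 < C ∧ ∀ t : ℝ, 2 ≤ t → R t ≤ C * Real.log t := by
    classical
  have hRt : ∀ t : ℝ, 0 ≤ t →
      R t = ∑ G ∈ (GSet_finite (K := Fq) ⌊t⌋₊).toFinset, 1 / (q : ℝ) ^ G.natDegree := by
    intro t ht
    rw [hR t]
    have hset : {G : Polynomial Fq | Squarefree G ∧ G.Monic ∧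
        ¬ (X : Polynomial Fq) ∣ G ∧ (polyOrd G : ℝ) ≤ t}
        = {G : Polynomial Fq | Squarefree G ∧ G.Monic ∧
        ¬ (X : Polynomial Fq) ∣ G ∧ polyOrd G ≤ ⌊t⌋₊} := by
      ext G
      simp only [Set.mem_setOf_eq, and_congr_right_iff]
      intro _ _ _
      rw [Nat.le_floor_iff ht]
    rw [hset, finsum_mem_eq_finite_toFinset_sum _ (GSet_finite (K := Fq) ⌊t⌋₊)]
  have hmain : ∀ t : ℝ, 2 ≤ t → R t ≤ 64 * Real.log t := by
    intro t ht
    have ht0 : (0 : ℝ) ≤ t := by linarith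
    have hT2 : 2 ≤ ⌊t⌋₊ := Nat.le_floor (by exact_mod_cast ht)
    have hkey := key_bound (K := Fq) ⌊t⌋₊ hT2
    rw [hcard] at hkey
    rw [hRt t ht0]
    refine hkey.trans ?_
    have hTpos : (0 : ℝ) < (⌊t⌋₊ : ℝ) := by
      have : (2 : ℝ) ≤ (⌊t⌋₊ : ℝ) := by exact_mod_cast hT2
      linarith
    have : Real.log (⌊t⌋₊ : ℝ) ≤ Real.log t := Real.log_le_log hTpos (Nat.floor_le ht0)
    linarith
  have hnonneg : ∀ t : ℝ, 0 ≤ t → 0 ≤ R t := by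
    intro t ht
    rw [hRt t ht]
    apply Finset.sum_nonneg
    intro G _
    positivity
  constructor
  · have h0 : Tendsto (fun t : ℝ => 64 * Real.log t / t) atTop (nhds 0) := by
      have h1 := Real.isLittleO_log_id_atTop.tendsto_div_nhds_zero
      have h2 := h1.const_mul (64 : ℝ)
      simp only [mul_zero] at h2
      refine h2.congr (fun t => ?_)
      simp [id, mul_div_assoc]
    apply tendsto_of_tendsto_of_tendsto_of_le_of_le' tendsto_const_nhds h0
    · filter_upwards [eventually_ge_atTop (2 : ℝ)] with t ht
      have htpos : (0 : ℝ) < t := by linarith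
      exact div_nonneg (hnonneg t (by linarith)) htpos.le
    · filter_upwards [eventually_ge_atTop (2 : ℝ)] with t ht
      have htpos : (0 : ℝ) < t := by linarith
      gcongr ?_ / t; exact hmain t ht
  · exact ⟨64, by norm_num, hmain⟩
end

section
/- Let q be a prime power ≥ 2 and i a positive integer. Then ∏_{j=1}^{i} (1 + 1/q^j)^{N_j} ≤ e·i, where N_j denotes the number of monic irreducible polynomials of degree j over F_q and e is Euler's number. -/
open Polynomial

lemma my_aux_dvd {Fq : Type} [Field Fq] [Fintype Fq] {f : Fq[X]}
    (hirr : Irreducible f) :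
    f ∣ X ^ (Fintype.card Fq ^ f.natDegree) - X := by
  have hf0 : f ≠ 0 := hirr.ne_zero
  haveI : Fact (Irreducible f) := ⟨hirr⟩
  let pb := AdjoinRoot.powerBasis hf0
  haveI : Module.Finite Fq (AdjoinRoot f) := Module.Finite.of_basis pb.basis
  haveI : Finite (AdjoinRoot f) := Module.finite_of_finite Fq
  haveI : Fintype (AdjoinRoot f) := Fintype.ofFinite _
  have hcard : Fintype.card (AdjoinRoot f) = Fintype.card Fq ^ f.natDegree := by
    rw [Module.card_fintype pb.basis]
    simp [pb, AdjoinRoot.powerBasis]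
  have hroot : (AdjoinRoot.root f) ^ (Fintype.card Fq ^ f.natDegree) = AdjoinRoot.root f := by
    rw [← hcard]; exact FiniteField.pow_card _
  have h0 : (aeval (AdjoinRoot.root f))
      ((X ^ (Fintype.card Fq ^ f.natDegree) - X : Fq[X])) = 0 := by
    simp [hroot]
  rw [AdjoinRoot.aeval_eq] at h0
  exact AdjoinRoot.mk_eq_zero.mp h0

lemma my_card_bound (Fq : Type) [Field Fq] [Fintype Fq] (j : ℕ) (hj : 0 < j) :
    j * Nat.card {F : Fq[X] // F.Monic ∧ Irreducible F ∧ F.natDegree = j}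
      ≤ Fintype.card Fq ^ j := by
  classical
  set q := Fintype.card Fq with hq
  have hq1 : 1 < q ^ j := Nat.one_lt_pow hj.ne' Fintype.one_lt_card
  set D : Fq[X] := X ^ (q ^ j) - X with hD
  have hD0 : D ≠ 0 := FiniteField.X_pow_card_sub_X_ne_zero Fq hq1
  have hDdeg : D.natDegree = q ^ j := FiniteField.X_pow_card_sub_X_natDegree_eq Fq hq1
  set S : Set Fq[X] := {F | F.Monic ∧ Irreducible F ∧ F.natDegree = j} with hS
  have hsub : ∀ F ∈ S, F.Monic ∧ F ∣ D := by
    rintro F ⟨hm, hirr, hdeg⟩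
    refine ⟨hm, ?_⟩
    have := my_aux_dvd hirr
    rwa [hdeg] at this
  have hfin : S.Finite := by
    have h1 : ({g : Fq[X] | g.Monic ∧ g ∣ D}).Finite :=
      Set.finite_coe_iff.mp (@Finite.of_fintype _ (Polynomial.fintypeSubtypeMonicDvd D hD0))
    exact h1.subset fun F hF => hsub F hF
  set T : Finset Fq[X] := hfin.toFinset with hT
  have hcardN : Nat.card {F : Fq[X] // F.Monic ∧ Irreducible F ∧ F.natDegree = j} = T.card := by
    show Nat.card S = T.card
    rw [Nat.card_coe_set_eq, Set.ncard_eq_toFinset_card S hfin]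
  have hpair : (↑T : Set Fq[X]).Pairwise (Function.onFun IsCoprime (id : Fq[X] → Fq[X])) := by
    intro f hf g hg hfg
    have hf' : f ∈ S := hfin.coe_toFinset ▸ hf
    have hg' : g ∈ S := hfin.coe_toFinset ▸ hg
    refine (hf'.2.1.coprime_iff_not_dvd).mpr fun hdvd => hfg ?_
    exact Polynomial.eq_of_monic_of_associated hf'.1 hg'.1
      (hf'.2.1.associated_of_dvd hg'.2.1 hdvd)
  have hprod : (∏ f ∈ T, f) ∣ D :=
    Finset.prod_dvd_of_coprime hpair fun f hf =>
      (hsub f (hfin.mem_toFinset.mp hf)).2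
  have hdegprod : (∏ f ∈ T, f).natDegree = T.card * j := by
    rw [Polynomial.natDegree_prod _ _ fun f hf =>
      ((hsub f (hfin.mem_toFinset.mp hf)).1).ne_zero]
    rw [Finset.sum_congr rfl fun f hf => by
      rw [(hfin.mem_toFinset.mp hf : f ∈ S).2.2]]
    simp [mul_comm, hT]
  have := Polynomial.natDegree_le_of_dvd hprod hD0
  rw [hdegprod, hDdeg] at this
  calc j * Nat.card {F : Fq[X] // F.Monic ∧ Irreducible F ∧ F.natDegree = j}
      = T.card * j := by rw [hcardN, mul_comm]
    _ ≤ q ^ j := this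

/-- **Product bound.**
Let `q ≥ 2` be a prime power and `i ≥ 1`.  Then
`∏_{j=1}^{i} (1 + 1/q^j)^{N_j} ≤ e·i`, where `N_j` is the number of monic
irreducible polynomials of degree `j` over `F_q` and `e` is Euler's number. -/
theorem prod_one_add_inv_q_pow_le
    (q i : ℕ) (hq : ∃ p m : ℕ, p.Prime ∧ 0 < m ∧ q = p ^ m) (hi : 0 < i)
    (Fq : Type) [Field Fq] [Fintype Fq] (hcard : Fintype.card Fq = q)
    (N : ℕ → ℕ)
    (hN : ∀ j : ℕ, N j =
      Nat.card {F : Polynomial Fq // F.Monic ∧ Irreducible F ∧ F.natDegree = j}) :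
    ∏ j ∈ Finset.Icc 1 i, (1 + 1 / (q : ℝ) ^ j) ^ (N j) ≤ Real.exp 1 * i := by
  have hq1 : 1 < q := hcard ▸ Fintype.one_lt_card
  have hqR : (0 : ℝ) < (q : ℝ) := by
    exact_mod_cast Nat.lt_of_lt_of_le Nat.zero_lt_one hq1.le
  have hNle : ∀ j ∈ Finset.Icc 1 i, (N j : ℝ) / (q : ℝ) ^ j ≤ 1 / j := by
    intro j hj
    rw [Finset.mem_Icc] at hj
    have hj0 : 0 < j := hj.1
    have hb : j * N j ≤ q ^ j := by
      rw [hN j, ← hcard]; exact my_card_bound Fq j hj0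
    rw [div_le_div_iff₀ (by positivity) (by exact_mod_cast hj0)]
    calc (N j : ℝ) * j = (j * N j : ℕ) := by push_cast; ring
      _ ≤ ((q ^ j : ℕ) : ℝ) := by exact_mod_cast hb
      _ = 1 * (q : ℝ) ^ j := by push_cast; ring
  calc ∏ j ∈ Finset.Icc 1 i, (1 + 1 / (q : ℝ) ^ j) ^ (N j)
      ≤ ∏ j ∈ Finset.Icc 1 i, Real.exp ((N j : ℝ) / (q : ℝ) ^ j) := by
        refine Finset.prod_le_prod (fun j _ => by positivity) fun j _ => ?_
        have h1 : 1 + 1 / (q : ℝ) ^ j ≤ Real.exp (1 / (q : ℝ) ^ j) := by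
          have := Real.add_one_le_exp (1 / (q : ℝ) ^ j)
          linarith
        calc (1 + 1 / (q : ℝ) ^ j) ^ (N j) ≤ (Real.exp (1 / (q : ℝ) ^ j)) ^ (N j) :=
              pow_le_pow_left₀ (by positivity) h1 _
          _ = Real.exp ((N j : ℝ) / (q : ℝ) ^ j) := by
              rw [← Real.exp_nat_mul]; congr 1; ring
    _ = Real.exp (∑ j ∈ Finset.Icc 1 i, (N j : ℝ) / (q : ℝ) ^ j) := by
        rw [Real.exp_sum]
    _ ≤ Real.exp (∑ j ∈ Finset.Icc 1 i, (1 : ℝ) / j) :=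
        Real.exp_le_exp.mpr (Finset.sum_le_sum hNle)
    _ = Real.exp ((harmonic i : ℝ)) := by
        congr 1
        rw [← Finset.Ico_add_one_right_eq_Icc, Finset.sum_Ico_eq_sum_range]
        simp only [harmonic]
        push_cast
        refine Finset.sum_congr (by norm_num) fun j _ => ?_
        rw [one_div, add_comm (1:ℝ) (j:ℝ)]
    _ ≤ Real.exp (1 + Real.log i) := Real.exp_le_exp.mpr (harmonic_le_one_add_log i)
    _ = Real.exp 1 * i := by
        rw [Real.exp_add, Real.exp_log (by exact_mod_cast hi)]
end

section
/- Let q be a prime power and, for positive integers i and real t ≥ 1, set δ(i, t) = Σ φ(E), the sum over positive integers E ≤ t with ord_E q = i. Then Σ_{1 ≤ i ≤ t} δ(i, t)/q^i = O(log t) as t → ∞. -/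
open Finset

/-- **Logarithmic bound for the weighted totient sums.**
Let `q` be a prime power and, for positive integers `i` and `t`, let
`δ(i, t) = ∑ φ(E)`, the sum over positive integers `E ≤ t` (coprime to `q`)
whose multiplicative order of `q` modulo `E` equals `i`.  Then
`∑_{1 ≤ i ≤ t} δ(i, t)/q^i = O(log t)` as `t → ∞`. -/
theorem sum_delta_div_q_pow_isBigO_log
    (q : ℕ) (hq : ∃ p m : ℕ, p.Prime ∧ 0 < m ∧ q = p ^ m)
    (δ : ℕ → ℕ → ℕ)
    (hδ : ∀ i t : ℕ, δ i t =
      ∑ᶠ E ∈ {E : ℕ | 1 ≤ E ∧ E ≤ t ∧ orderOf ((q : ZMod E)) = i}, Nat.totient E) :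
    ∃ C : ℝ, 0 < C ∧ ∀ t : ℕ, 2 ≤ t →
      ∑ i ∈ Finset.Icc 1 t, ((δ i t : ℝ) / (q : ℝ) ^ i) ≤ C * Real.log t := by
  obtain ⟨p, m, hp, hm, rfl⟩ := hq
  set q := p ^ m with hqdef
  have hq2 : 2 ≤ q := le_trans hp.two_le (Nat.le_self_pow hm.ne' p)
  have hq2R : (2:ℝ) ≤ (q:ℝ) := by exact_mod_cast hq2
  have hq0R : (0:ℝ) < (q:ℝ) := by linarith
  have hlog2 : (0:ℝ) < Real.log 2 := Real.log_pos (by norm_num)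
  refine ⟨4 / Real.log 2, by positivity, ?_⟩
  intro t ht
  have htR : (2:ℝ) ≤ (t:ℝ) := by exact_mod_cast ht
  have hlogt : Real.log 2 ≤ Real.log t := Real.log_le_log (by norm_num) htR
  -- rewrite δ as a Finset sum
  have hδfin : ∀ i, δ i t = ∑ E ∈ (Icc 1 t).filter
      (fun E => orderOf ((q : ZMod E)) = i), E.totient := by
    intro i
    rw [hδ, ← finsum_mem_coe_finset]
    congr 1
    ext E
    simp [Finset.mem_Icc, and_assoc]
  -- key bound 1 : δ i t ≤ q ^ i
  have key1 : ∀ i : ℕ, 1 ≤ i → δ i t ≤ q ^ i := by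
    intro i hi
    rw [hδfin]
    have hqi : 2 ≤ q ^ i := le_trans hq2 (Nat.le_self_pow (by omega) q)
    have hsub : (Icc 1 t).filter (fun E => orderOf ((q : ZMod E)) = i)
        ⊆ (q ^ i - 1).divisors := by
      intro E hE
      simp only [mem_filter, mem_Icc] at hE
      obtain ⟨⟨hE1, hEt⟩, hord⟩ := hE
      have hdvd : E ∣ q ^ i - 1 := by
        have hpow : ((q : ZMod E)) ^ i = 1 := by
          rw [← hord]; exact pow_orderOf_eq_one _
        have h0 : ((q ^ i - 1 : ℕ) : ZMod E) = 0 := by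
          rw [Nat.cast_sub (by omega : 1 ≤ q ^ i)]
          push_cast
          simp [hpow]
        exact (ZMod.natCast_eq_zero_iff _ _).mp h0
      exact Nat.mem_divisors.mpr ⟨hdvd, by omega⟩
    calc ∑ E ∈ (Icc 1 t).filter (fun E => orderOf ((q : ZMod E)) = i), E.totient
        ≤ ∑ E ∈ (q ^ i - 1).divisors, E.totient :=
          Finset.sum_le_sum_of_subset hsub
      _ = q ^ i - 1 := Nat.sum_totient _
      _ ≤ q ^ i := Nat.sub_le _ _
  -- key bound 2 : δ i t ≤ t ^ 2
  have key2 : ∀ i : ℕ, δ i t ≤ t ^ 2 := by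
    intro i
    rw [hδfin]
    calc ∑ E ∈ (Icc 1 t).filter (fun E => orderOf ((q : ZMod E)) = i), E.totient
        ≤ ∑ E ∈ Icc 1 t, E.totient :=
          Finset.sum_le_sum_of_subset (filter_subset _ _)
      _ ≤ ∑ _E ∈ Icc 1 t, t := Finset.sum_le_sum
          (fun E hE => le_trans (Nat.totient_le E) (mem_Icc.mp hE).2)
      _ = t * t := by rw [Finset.sum_const, Nat.card_Icc]; simp [Nat.add_sub_cancel]
      _ = t ^ 2 := (sq t).symm
  set A := (Icc 1 t).filter (fun i => (q:ℝ) ^ i ≤ (t:ℝ) ^ 2) with hAdef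
  set B := (Icc 1 t).filter (fun i => ¬ (q:ℝ) ^ i ≤ (t:ℝ) ^ 2) with hBdef
  have hsplit : ∑ i ∈ Icc 1 t, ((δ i t : ℝ) / (q : ℝ) ^ i)
      = (∑ i ∈ A, ((δ i t : ℝ) / (q : ℝ) ^ i))
        + ∑ i ∈ B, ((δ i t : ℝ) / (q : ℝ) ^ i) :=
    (Finset.sum_filter_add_sum_filter_not _ _ _).symm
  -- bound for A
  have hAsum : ∑ i ∈ A, ((δ i t : ℝ) / (q : ℝ) ^ i) ≤ (A.card : ℝ) := by
    calc ∑ i ∈ A, ((δ i t : ℝ) / (q : ℝ) ^ i) ≤ ∑ _i ∈ A, (1:ℝ) := by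
          apply Finset.sum_le_sum
          intro i hi
          have hi1 : 1 ≤ i := (mem_Icc.mp (mem_filter.mp hi).1).1
          rw [div_le_one (by positivity)]
          exact_mod_cast key1 i hi1
      _ = (A.card : ℝ) := by simp
  have hAcard : (A.card : ℝ) ≤ 2 * Real.log t / Real.log 2 := by
    have hsub : A ⊆ Icc 1 (Nat.floor (2 * Real.log t / Real.log 2)) := by
      intro i hi
      obtain ⟨hiIcc, hile⟩ := mem_filter.mp hi
      obtain ⟨hi1, _⟩ := mem_Icc.mp hiIcc
      have h2i : (2:ℝ) ^ i ≤ (t:ℝ) ^ 2 :=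
        le_trans (pow_le_pow_left₀ (by norm_num) hq2R i) hile
      have hlog : (i:ℝ) * Real.log 2 ≤ 2 * Real.log t := by
        have := Real.log_le_log (by positivity) h2i
        rwa [Real.log_pow, Real.log_pow, Nat.cast_ofNat] at this
      have hiX : (i:ℝ) ≤ 2 * Real.log t / Real.log 2 := by
        rw [le_div_iff₀ hlog2]; exact hlog
      exact mem_Icc.mpr ⟨hi1, Nat.le_floor hiX⟩
    calc (A.card : ℝ) ≤ ((Icc 1 (Nat.floor (2 * Real.log t / Real.log 2))).card : ℝ) := by
          exact_mod_cast Finset.card_le_card hsub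
      _ ≤ (Nat.floor (2 * Real.log t / Real.log 2) : ℝ) := by
          rw [Nat.card_Icc]; push_cast; simp
      _ ≤ 2 * Real.log t / Real.log 2 := Nat.floor_le (by positivity)
  -- bound for B
  have hBsum : ∑ i ∈ B, ((δ i t : ℝ) / (q : ℝ) ^ i) ≤ 2 := by
    rcases B.eq_empty_or_nonempty with h | h
    · simp [h]
    · set i0 := B.min' h with hi0def
      have hi0B : i0 ∈ B := B.min'_mem h
      have ht2 : ((t:ℝ)) ^ 2 ≤ (q:ℝ) ^ i0 :=
        le_of_not_ge (mem_filter.mp hi0B).2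
      have step : ∀ i ∈ B, ((δ i t : ℝ) / (q:ℝ) ^ i) ≤ (1/2:ℝ) ^ (i - i0) := by
        intro i hi
        have hle : i0 ≤ i := B.min'_le i hi
        have hq0 : (0:ℝ) < (q:ℝ) ^ i := by positivity
        rw [div_le_iff₀ hq0]
        have h1 : (δ i t : ℝ) ≤ (t:ℝ) ^ 2 := by exact_mod_cast key2 i
        have hpowsplit : (q:ℝ) ^ i = (q:ℝ) ^ i0 * (q:ℝ) ^ (i - i0) := by
          rw [← pow_add]; congr 1; omega
        have h2 : (1:ℝ) ≤ (1/2:ℝ) ^ (i - i0) * (q:ℝ) ^ (i - i0) := by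
          rw [← mul_pow]
          apply one_le_pow₀
          linarith
        calc (δ i t : ℝ) ≤ (t:ℝ) ^ 2 := h1
          _ ≤ (q:ℝ) ^ i0 := ht2
          _ = (q:ℝ) ^ i0 * 1 := (mul_one _).symm
          _ ≤ (q:ℝ) ^ i0 * ((1/2:ℝ) ^ (i - i0) * (q:ℝ) ^ (i - i0)) := by
              apply mul_le_mul_of_nonneg_left h2 (by positivity)
          _ = (1/2:ℝ) ^ (i - i0) * (q:ℝ) ^ i := by rw [hpowsplit]; ring
      calc ∑ i ∈ B, ((δ i t : ℝ) / (q:ℝ) ^ i)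
          ≤ ∑ i ∈ B, (1/2:ℝ) ^ (i - i0) := Finset.sum_le_sum step
        _ = ∑ j ∈ B.image (· - i0), (1/2:ℝ) ^ j := by
            rw [Finset.sum_image]
            intro x hx y hy hxy
            have hx0 := B.min'_le x hx
            have hy0 := B.min'_le y hy
            simp only [hi0def] at hxy hx0 hy0
            omega
        _ ≤ ∑ j ∈ Finset.range (t + 1), (1/2:ℝ) ^ j := by
            apply Finset.sum_le_sum_of_subset_of_nonneg
            · intro j hj
              obtain ⟨i, hiB, rfl⟩ := Finset.mem_image.mp hj
              have : i ≤ t := (mem_Icc.mp (mem_filter.mp hiB).1).2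
              exact Finset.mem_range.mpr (by omega)
            · intro j _ _; positivity
        _ ≤ 2 := sum_geometric_two_le _
  -- combine
  have h2le : (2:ℝ) ≤ 2 / Real.log 2 * Real.log t := by
    rw [div_mul_eq_mul_div, le_div_iff₀ hlog2]
    nlinarith
  have heq : 2 * Real.log t / Real.log 2 = 2 / Real.log 2 * Real.log t := by ring
  rw [hsplit]
  have : 4 / Real.log 2 * Real.log t
      = 2 / Real.log 2 * Real.log t + 2 / Real.log 2 * Real.log t := by ring
  rw [this]
  have hA' : ∑ i ∈ A, ((δ i t : ℝ) / (q : ℝ) ^ i) ≤ 2 / Real.log 2 * Real.log t := by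
    calc _ ≤ (A.card : ℝ) := hAsum
      _ ≤ 2 * Real.log t / Real.log 2 := hAcard
      _ = _ := heq
  linarith
end

section
/- Let q be a prime power of characteristic p, let k ≥ 1 and u ≥ 1 be integers, and set t = ⌊log_p k⌋ + 1. Then the density λ_{q,k}(p^t u) of k-normal elements of F_{q^{p^t u}} over F_q satisfies λ_{q,k}(p^t u) ≥ λ_{q,0}(u)/q^k, where λ_{q,0}(u) is the density of normal elements of F_{q^u} over F_q. -/
open Polynomial

namespace KNormalAux
variable (Fq : Type) [Field Fq] [Fintype Fq]
variable (E : Type) [Field E] [Algebra Fq E]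

noncomputable def frobL : E →ₗ[Fq] E where
  toFun x := x ^ Fintype.card Fq
  map_add' x y := by
    have hp := CharP.char_is_prime Fq (ringChar Fq)
    haveI : Fact (Nat.Prime (ringChar Fq)) := ⟨hp⟩
    haveI : CharP E (ringChar Fq) :=
      charP_of_injective_algebraMap (algebraMap Fq E).injective (ringChar Fq)
    obtain ⟨n, hn⟩ := FiniteField.card Fq (ringChar Fq)
    rw [hn.2, add_pow_char_pow]
  map_smul' c x := by
    simp only [Algebra.smul_def, mul_pow, RingHom.id_apply]
    rw [← map_pow, FiniteField.pow_card]

variable {Fq E}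

lemma frobL_apply (x : E) : frobL Fq E x = x ^ Fintype.card Fq := rfl

lemma frobL_pow (i : ℕ) (x : E) :
    ((frobL Fq E) ^ i) x = x ^ (Fintype.card Fq) ^ i := by
  induction i with
  | zero => simp
  | succ n ih =>
      rw [pow_succ', Module.End.mul_apply, ih, frobL_apply, ← pow_mul, ← pow_succ]

lemma aeval_frobL_apply (g : Fq[X]) (x : E) :
    aeval (frobL Fq E) g x
      = ∑ i ∈ Finset.range (g.natDegree + 1), g.coeff i • x ^ (Fintype.card Fq) ^ i := by
  rw [aeval_eq_sum_range]
  simp [LinearMap.sum_apply, LinearMap.smul_apply, frobL_pow]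

lemma natcard_ker_aeval_le [Module.Finite Fq E] (g : Fq[X]) (hg : g ≠ 0) :
    Nat.card (LinearMap.ker (aeval (frobL Fq E) g)) ≤ (Fintype.card Fq) ^ g.natDegree := by
  classical
  haveI : Finite E := Module.finite_iff_finite.mp ‹_›
  set q := Fintype.card Fq with hq
  have hq1 : 1 < q := Fintype.one_lt_card
  set d := g.natDegree with hd
  set P : E[X] := ∑ i ∈ Finset.range (d+1), C (algebraMap Fq E (g.coeff i)) * X ^ (q ^ i) with hP
  have hcoeff : ∀ j ∈ Finset.range (d+1),
      P.coeff (q ^ j) = algebraMap Fq E (g.coeff j) := by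
    intro j hj
    rw [hP, finset_sum_coeff]
    rw [Finset.sum_eq_single j]
    · simp
    · intro b hb hbj
      rw [coeff_C_mul, coeff_X_pow, if_neg, mul_zero]
      exact fun h => hbj (Nat.pow_right_injective hq1 h.symm)
    · intro h; exact absurd hj h
  have hPne : P ≠ 0 := by
    intro h0
    have hc := hcoeff d (Finset.self_mem_range_succ d)
    rw [h0, coeff_zero] at hc
    have : g.coeff d = 0 := (map_eq_zero_iff _ (algebraMap Fq E).injective).mp hc.symm
    exact Polynomial.leadingCoeff_ne_zero.mpr hg this
  have hPdeg : P.natDegree ≤ q ^ d := by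
    refine Polynomial.natDegree_sum_le_of_forall_le _ _ (fun i hi => ?_)
    refine le_trans (Polynomial.natDegree_C_mul_le _ _) ?_
    rw [natDegree_X_pow]
    exact Nat.pow_le_pow_right (lt_trans Nat.zero_lt_one hq1)
      (Nat.lt_succ_iff.mp (Finset.mem_range.mp hi))
  have hroot : ∀ x : E, x ∈ LinearMap.ker (aeval (frobL Fq E) g) → P.IsRoot x := by
    intro x hx
    rw [LinearMap.mem_ker] at hx
    have := aeval_frobL_apply g x
    rw [hx] at this
    rw [IsRoot, hP, eval_finset_sum]
    simp only [eval_mul, eval_C, eval_pow, eval_X]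
    exact (Finset.sum_congr rfl fun i _ => (Algebra.smul_def _ _).symm).trans this.symm
  have hinj : Function.Injective
      (fun z : LinearMap.ker (aeval (frobL Fq E) g) =>
        (⟨z.1, Multiset.mem_toFinset.mpr ((mem_roots hPne).mpr (hroot z.1 z.2))⟩
          : {y // y ∈ P.roots.toFinset})) := by
    intro a b hab
    simp only [Subtype.mk.injEq] at hab
    exact Subtype.ext hab
  calc Nat.card (LinearMap.ker (aeval (frobL Fq E) g))
      ≤ Nat.card {y // y ∈ P.roots.toFinset} := Nat.card_le_card_of_injective _ hinj
    _ = P.roots.toFinset.card := by rw [Nat.card_eq_fintype_card, Fintype.card_coe]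
    _ ≤ Multiset.card P.roots := Multiset.toFinset_card_le _
    _ ≤ P.natDegree := card_roots' P
    _ ≤ q ^ d := hPdeg

lemma natcard_eq_pow_finrank {V : Type*} [AddCommGroup V] [Module Fq V] [Module.Finite Fq V] :
    Nat.card V = (Fintype.card Fq) ^ (Module.finrank Fq V) := by
  haveI : Finite V := Module.finite_iff_finite.mp ‹_›
  haveI := Fintype.ofFinite V
  rw [Nat.card_eq_fintype_card]
  exact Module.card_eq_pow_finrank

lemma finrank_ker_aeval_le [Module.Finite Fq E] (g : Fq[X]) (hg : g ≠ 0) :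
    Module.finrank Fq (LinearMap.ker (aeval (frobL Fq E) g)) ≤ g.natDegree := by
  have h := natcard_ker_aeval_le (E := E) g hg
  have h2 := natcard_eq_pow_finrank (Fq := Fq) (V := ↥(LinearMap.ker (aeval (frobL Fq E) g)))
  rw [h2] at h
  exact (Nat.pow_le_pow_iff_right Fintype.one_lt_card).mp h

lemma pow_card_pow_finrank [Module.Finite Fq E] (x : E) :
    x ^ (Fintype.card Fq ^ Module.finrank Fq E) = x := by
  haveI : Finite E := Module.finite_iff_finite.mp ‹_›
  haveI := Fintype.ofFinite E
  have h : Fintype.card E = Fintype.card Fq ^ Module.finrank Fq E := Module.card_eq_pow_finrank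
  rw [← h]
  exact FiniteField.pow_card x

lemma aeval_frobL_X_pow_sub_one [Module.Finite Fq E] {m : ℕ} (hE : Module.finrank Fq E = m) :
    aeval (frobL Fq E) ((X : Fq[X]) ^ m - 1) = 0 := by
  ext x
  simp only [map_sub, map_pow, aeval_X, map_one, LinearMap.sub_apply, Module.End.one_apply,
    LinearMap.zero_apply, frobL_pow]
  rw [← hE, pow_card_pow_finrank, sub_self]

lemma finrank_ker_aeval_eq [Module.Finite Fq E] {m : ℕ} (hE : Module.finrank Fq E = m)
    {g h : Fq[X]} (hg : g ≠ 0) (hh : h ≠ 0) (hgh : g * h = (X : Fq[X]) ^ m - 1) :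
    Module.finrank Fq (LinearMap.ker (aeval (frobL Fq E) g)) = g.natDegree := by
  have hdeg : g.natDegree + h.natDegree = m := by
    have := natDegree_mul hg hh
    rw [hgh] at this
    rw [← this]
    have : ((X : Fq[X]) ^ m - 1).natDegree = m := by
      rw [show ((X : Fq[X]) ^ m - 1) = X ^ m - C 1 by rw [map_one], natDegree_X_pow_sub_C]
    omega
  have hranklg := finrank_ker_aeval_le (E := E) g hg
  have hrankh := finrank_ker_aeval_le (E := E) h hh
  have hrange : LinearMap.range (aeval (frobL Fq E) g) ≤ LinearMap.ker (aeval (frobL Fq E) h) := by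
    rintro _ ⟨x, rfl⟩
    rw [LinearMap.mem_ker, ← Module.End.mul_apply, ← map_mul, mul_comm h g, hgh,
      aeval_frobL_X_pow_sub_one hE, LinearMap.zero_apply]
  have hrn := LinearMap.finrank_range_add_finrank_ker (aeval (frobL Fq E) g)
  have hle2 : Module.finrank Fq (LinearMap.range (aeval (frobL Fq E) g)) ≤ h.natDegree :=
    le_trans (Submodule.finrank_mono hrange) hrankh
  rw [hE] at hrn
  omega


variable (Fq) in
noncomputable def psi (x : E) : Fq[X] →ₗ[Fq] E where
  toFun g := aeval (frobL Fq E) g x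
  map_add' a b := by simp only [map_add, LinearMap.add_apply]
  map_smul' c a := by simp only [map_smul, LinearMap.smul_apply, RingHom.id_apply]

lemma psi_apply (x : E) (g : Fq[X]) : psi Fq x g = aeval (frobL Fq E) g x := rfl

lemma conj_pow_reduce [Module.Finite Fq E] {m : ℕ} (hE : Module.finrank Fq E = m)
    (hm : 0 < m) (x : E) (i : ℕ) :
    ∃ j, j < m ∧ x ^ (Fintype.card Fq) ^ i = x ^ (Fintype.card Fq) ^ j := by
  induction i using Nat.strong_induction_on with
  | _ i ih =>
    by_cases h : i < m
    · exact ⟨i, h, rfl⟩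
    · push_neg at h
      have hi : x ^ (Fintype.card Fq) ^ i = x ^ (Fintype.card Fq) ^ (i - m) := by
        have : (Fintype.card Fq) ^ i = (Fintype.card Fq) ^ m * (Fintype.card Fq) ^ (i - m) := by
          rw [← pow_add]
          congr 1
          omega
        rw [this, pow_mul, ← hE, pow_card_pow_finrank]
      obtain ⟨j, hj, hx⟩ := ih (i - m) (by omega)
      exact ⟨j, hj, hi.trans hx⟩

lemma span_conj_eq_range [Module.Finite Fq E] {m : ℕ} (hE : Module.finrank Fq E = m)
    (hm : 0 < m) (x : E) :
    Submodule.span Fq (Set.range fun i : Fin m => x ^ (Fintype.card Fq) ^ (i : ℕ))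
      = LinearMap.range (psi Fq x) := by
  apply le_antisymm
  · rw [Submodule.span_le]
    rintro _ ⟨i, rfl⟩
    exact ⟨X ^ (i : ℕ), by rw [psi_apply, map_pow, aeval_X, frobL_pow]⟩
  · rintro _ ⟨g, rfl⟩
    rw [psi_apply, aeval_frobL_apply]
    refine Submodule.sum_mem _ (fun i _ => Submodule.smul_mem _ _ ?_)
    obtain ⟨j, hj, hx⟩ := conj_pow_reduce hE hm x i
    rw [hx]
    exact Submodule.subset_span ⟨⟨j, hj⟩, rfl⟩

lemma span_conj_le_range (x : E) (d : ℕ) :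
    Submodule.span Fq (Set.range fun i : Fin d => x ^ (Fintype.card Fq) ^ (i : ℕ))
      ≤ LinearMap.range (psi Fq x) := by
  rw [Submodule.span_le]
  rintro _ ⟨i, rfl⟩
  exact ⟨X ^ (i : ℕ), by rw [psi_apply, map_pow, aeval_X, frobL_pow]⟩

lemma finrank_range_psi_le [Module.Finite Fq E] {x : E} {g : Fq[X]} (hg : g ≠ 0)
    (hgx : aeval (frobL Fq E) g x = 0) :
    Module.finrank Fq (LinearMap.range (psi Fq x)) ≤ g.natDegree := by
  classical
  set d := g.natDegree with hd
  set g1 := g * C (g.leadingCoeff)⁻¹ with hg1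
  have hmonic : g1.Monic := monic_mul_leadingCoeff_inv hg
  have hcne : (C (g.leadingCoeff)⁻¹ : Fq[X]) ≠ 0 := by
    rw [Ne, C_eq_zero, inv_eq_zero]
    exact leadingCoeff_ne_zero.mpr hg
  have hg1deg : g1.natDegree = d := by
    rw [hg1, natDegree_mul hg hcne, natDegree_C, add_zero]
  have hg1x : aeval (frobL Fq E) g1 x = 0 := by
    rw [hg1, mul_comm, map_mul, Module.End.mul_apply, hgx, map_zero]
  have key : LinearMap.range (psi Fq x)
      ≤ Submodule.span Fq (Set.range fun i : Fin d => x ^ (Fintype.card Fq) ^ (i : ℕ)) := by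
    rintro _ ⟨f, rfl⟩
    have hdecomp : psi Fq x f = psi Fq x (f %ₘ g1) := by
      have hzero : psi Fq x (g1 * (f /ₘ g1)) = 0 := by
        rw [psi_apply, mul_comm, map_mul, Module.End.mul_apply, hg1x, map_zero]
      have hsplit : psi Fq x f = psi Fq x (f %ₘ g1) + psi Fq x (g1 * (f /ₘ g1)) := by
        rw [← map_add, modByMonic_add_div f g1]
      rw [hsplit, hzero, add_zero]
    rw [hdecomp]
    by_cases h0 : f %ₘ g1 = 0
    · rw [h0, map_zero]
      exact Submodule.zero_mem _
    · rw [psi_apply, aeval_frobL_apply]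
      refine Submodule.sum_mem _ (fun i hi => Submodule.smul_mem _ _ ?_)
      have hlt : (f %ₘ g1).natDegree < d := by
        rw [← hg1deg]
        exact natDegree_lt_natDegree h0 (degree_modByMonic_lt f hmonic)
      have hi' : i < d := by
        have := Finset.mem_range.mp hi
        omega
      exact Submodule.subset_span ⟨⟨i, hi'⟩, rfl⟩
  refine le_trans (Submodule.finrank_mono key) ?_
  refine le_trans (finrank_span_le_card _) ?_
  rw [Set.toFinset_range]
  exact le_trans (Finset.card_image_le) (by rw [Finset.card_univ, Fintype.card_fin])

lemma le_finrank_range_psi [Module.Finite Fq E] {x : E} {d : ℕ}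
    (hann : ∀ f : Fq[X], f ≠ 0 → aeval (frobL Fq E) f x = 0 → d ≤ f.natDegree) :
    d ≤ Module.finrank Fq (LinearMap.range (psi Fq x)) := by
  classical
  have hli : LinearIndependent Fq (fun i : Fin d => x ^ (Fintype.card Fq) ^ (i : ℕ)) := by
    rw [Fintype.linearIndependent_iff]
    intro c hc
    set f : Fq[X] := ∑ i : Fin d, C (c i) * X ^ (i : ℕ) with hf
    have hfx : aeval (frobL Fq E) f x = 0 := by
      rw [hf, map_sum, LinearMap.sum_apply, ← hc]
      refine Finset.sum_congr rfl (fun i _ => ?_)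
      rw [map_mul, map_pow, aeval_X, Module.End.mul_apply, frobL_pow, aeval_C,
        Module.algebraMap_end_apply]
    have hf0 : f = 0 := by
      rcases Nat.eq_zero_or_pos d with hd0 | hd0
      · rw [hf]
        subst hd0
        simp
      · by_contra hne
        have h1 := hann f hne hfx
        have h2 : f.natDegree ≤ d - 1 := by
          refine natDegree_sum_le_of_forall_le _ _ (fun i _ => ?_)
          refine le_trans (natDegree_C_mul_le _ _) ?_
          rw [natDegree_X_pow]
          omega
        omega
    intro i
    have hco : f.coeff (i : ℕ) = 0 := by rw [hf0, coeff_zero]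
    rw [hf, finset_sum_coeff] at hco
    rw [Finset.sum_eq_single i] at hco
    · rwa [coeff_C_mul, coeff_X_pow, if_pos rfl, mul_one] at hco
    · intro b _ hbi
      rw [coeff_C_mul, coeff_X_pow, if_neg, mul_zero]
      exact fun h => hbi (Fin.ext h.symm)
    · intro h
      exact absurd (Finset.mem_univ i) h
  have := finrank_span_eq_card (R := Fq) hli
  rw [Fintype.card_fin] at this
  rw [← this]
  exact Submodule.finrank_mono (span_conj_le_range x d)

variable (Fq) in
noncomputable def annIdealx (x : E) : Ideal Fq[X] where
  carrier := {g | aeval (frobL Fq E) g x = 0}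
  add_mem' := fun {a b} ha hb => by
    simp only [Set.mem_setOf_eq, map_add, LinearMap.add_apply] at *
    rw [ha, hb, add_zero]
  zero_mem' := by simp only [Set.mem_setOf_eq, map_zero, LinearMap.zero_apply]
  smul_mem' := fun c g hg => by
    simp only [Set.mem_setOf_eq, smul_eq_mul, map_mul, Module.End.mul_apply] at *
    rw [hg, map_zero]

lemma mem_annIdealx {x : E} {g : Fq[X]} :
    g ∈ annIdealx Fq x ↔ aeval (frobL Fq E) g x = 0 := Iff.rfl

lemma finrank_range_eq_of_fiber [Module.Finite Fq E] {x : E} {XU S : Fq[X]}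
    (hXUne : XU ≠ 0) (hSne : S ≠ 0)
    (hprime : ∀ π : Fq[X], Prime π → π ∣ S → π ∣ XU)
    (hx : aeval (frobL Fq E) (XU * S) x = 0)
    (hβ : ∀ w : Fq[X], w ≠ 0 → aeval (frobL Fq E) w (aeval (frobL Fq E) S x) = 0 →
      XU.natDegree ≤ w.natDegree) :
    Module.finrank Fq (LinearMap.range (psi Fq x)) = (XU * S).natDegree := by
  have hT0ne : XU * S ≠ 0 := mul_ne_zero hXUne hSne
  obtain ⟨g0, hg0⟩ := Submodule.IsPrincipal.principal (annIdealx Fq x)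
  have hmemI : ∀ g : Fq[X], g ∈ annIdealx Fq x ↔ g0 ∣ g := by
    intro g
    rw [hg0]
    exact Ideal.mem_span_singleton
  have hT0mem : g0 ∣ XU * S := (hmemI _).mp (mem_annIdealx.mpr hx)
  have hg0ne : g0 ≠ 0 := by
    intro h
    rw [h] at hT0mem
    exact hT0ne (zero_dvd_iff.mp hT0mem)
  obtain ⟨c, hc⟩ := hT0mem
  by_cases hcu : IsUnit c
  · have hcne : c ≠ 0 := hcu.ne_zero
    have hdeg : (XU * S).natDegree = g0.natDegree := by
      rw [hc, natDegree_mul hg0ne hcne, natDegree_eq_zero_of_isUnit hcu, add_zero]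
    have hg0x : aeval (frobL Fq E) g0 x = 0 :=
      mem_annIdealx.mp ((hmemI g0).mpr dvd_rfl)
    apply le_antisymm
    · rw [hdeg]
      exact finrank_range_psi_le hg0ne hg0x
    · rw [hdeg]
      refine le_finrank_range_psi (fun f hf hfx => ?_)
      exact natDegree_le_of_dvd ((hmemI f).mp (mem_annIdealx.mpr hfx)) hf
  · exfalso
    have hcne : c ≠ 0 := fun h => hT0ne (by rw [hc, h, mul_zero])
    obtain ⟨π, hπirr, hπdvd⟩ := WfDvdMonoid.exists_irreducible_factor hcu hcne
    have hπprime : Prime π := hπirr.prime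
    have hπT0 : π ∣ XU * S := hc ▸ Dvd.dvd.mul_left hπdvd g0
    have hπXU : π ∣ XU := by
      rcases hπprime.dvd_or_dvd hπT0 with h | h
      · exact h
      · exact hprime π hπprime h
    obtain ⟨w, hw⟩ := hπXU
    have hwne : w ≠ 0 := fun h => hXUne (by rw [hw, h, mul_zero])
    obtain ⟨c', hc'⟩ := hπdvd
    have hπne : π ≠ 0 := hπprime.ne_zero
    have hkey : g0 ∣ w * S := by
      refine ⟨c', mul_left_cancel₀ hπne ?_⟩
      calc π * (w * S) = (π * w) * S := by ring
        _ = XU * S := by rw [← hw]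
        _ = g0 * (π * c') := by rw [hc, hc']
        _ = π * (g0 * c') := by ring
    have hwS : aeval (frobL Fq E) w (aeval (frobL Fq E) S x) = 0 := by
      rw [← Module.End.mul_apply, ← map_mul]
      exact mem_annIdealx.mp ((hmemI _).mpr hkey)
    have hu := hβ w hwne hwS
    have hdegs : π.natDegree + w.natDegree = XU.natDegree := by
      rw [hw, natDegree_mul hπne hwne]
    have := hπirr.natDegree_pos
    omega

lemma ann_degree_ge_of_finrank [Module.Finite Fq E] {x : E} {u : ℕ}
    (hfr : Module.finrank Fq (Submodule.span Fq
      (Set.range fun i : Fin u => x ^ (Fintype.card Fq) ^ (i : ℕ))) = u) :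
    ∀ w : Fq[X], w ≠ 0 → aeval (frobL Fq E) w x = 0 → u ≤ w.natDegree := by
  intro w hwne hwx
  calc u = Module.finrank Fq (Submodule.span Fq
      (Set.range fun i : Fin u => x ^ (Fintype.card Fq) ^ (i : ℕ))) := hfr.symm
    _ ≤ Module.finrank Fq (LinearMap.range (psi Fq x)) :=
        Submodule.finrank_mono (span_conj_le_range x u)
    _ ≤ w.natDegree := finrank_range_psi_le hwne hwx

lemma card_eq_of_fibers {A B : Type*} [Finite A] [Finite B] (f : A → B) (c : ℕ)
    (h : ∀ b : B, Nat.card {a : A // f a = b} = c) : Nat.card A = c * Nat.card B := by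
  classical
  haveI := Fintype.ofFinite A
  haveI := Fintype.ofFinite B
  rw [Nat.card_eq_fintype_card, Nat.card_eq_fintype_card,
    ← Fintype.card_congr (Equiv.sigmaFiberEquiv f), Fintype.card_sigma]
  have : ∀ b : B, Fintype.card {a : A // f a = b} = c := by
    intro b
    rw [← Nat.card_eq_fintype_card]
    exact h b
  rw [Finset.sum_congr rfl (fun b _ => this b), Finset.sum_const, Finset.card_univ,
    smul_eq_mul, mul_comm]

lemma natcard_normal_transport
    (E1 E2 : Type) [Field E1] [Algebra Fq E1] [Field E2] [Algebra Fq E2]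
    [Module.Finite Fq E1] [Module.Finite Fq E2] {u : ℕ}
    (hE2 : Module.finrank Fq E2 = u)
    (hVcard : Nat.card {x : E1 // x ^ (Fintype.card Fq) ^ u = x} = (Fintype.card Fq) ^ u) :
    Nat.card {β : E1 // β ^ (Fintype.card Fq) ^ u = β ∧
      Module.finrank Fq (Submodule.span Fq
        (Set.range fun i : Fin u => β ^ (Fintype.card Fq) ^ (i : ℕ))) = u}
    = Nat.card {α : E2 // Module.finrank Fq (Submodule.span Fq
        (Set.range fun i : Fin u => α ^ (Fintype.card Fq) ^ (i : ℕ))) = u} := by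
  classical
  haveI : Finite E1 := Module.finite_iff_finite.mp ‹_›
  haveI : Finite E2 := Module.finite_iff_finite.mp ‹_›
  set q' := Fintype.card Fq with hq'
  have hp := CharP.char_is_prime Fq (ringChar Fq)
  haveI : Fact (Nat.Prime (ringChar Fq)) := ⟨hp⟩
  haveI hCh1 : CharP E1 (ringChar Fq) :=
    charP_of_injective_algebraMap (algebraMap Fq E1).injective (ringChar Fq)
  obtain ⟨en, hen⟩ := FiniteField.card Fq (ringChar Fq)
  have hqpow : ∀ m : ℕ, q' ^ m = (ringChar Fq) ^ ((en : ℕ) * m) := by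
    intro m
    rw [hq', hen.2, ← pow_mul]
  have hq0 : q' ≠ 0 := Fintype.card_ne_zero
  -- the subfield of `E1` fixed by the `u`-th power of the `q`-Frobenius
  set V : Subfield E1 :=
    { carrier := {x : E1 | x ^ q' ^ u = x}
      mul_mem' := fun {a b} ha hb => by
        simp only [Set.mem_setOf_eq] at *
        rw [mul_pow, ha, hb]
      one_mem' := by simp
      add_mem' := fun {a b} ha hb => by
        simp only [Set.mem_setOf_eq] at *
        rw [hqpow, add_pow_char_pow, ← hqpow, ha, hb]
      zero_mem' := by
        simp only [Set.mem_setOf_eq]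
        exact zero_pow (pow_ne_zero u hq0)
      neg_mem' := fun {a} ha => by
        simp only [Set.mem_setOf_eq] at *
        calc (-a) ^ q' ^ u = (0 - a) ^ q' ^ u := by rw [zero_sub]
          _ = 0 ^ q' ^ u - a ^ q' ^ u := by rw [hqpow, sub_pow_char_pow, ← hqpow]
          _ = -a := by rw [zero_pow (pow_ne_zero u hq0), ha, zero_sub]
      inv_mem' := fun a ha => by
        simp only [Set.mem_setOf_eq] at *
        rw [inv_pow, ha] } with hV
  have hmemV : ∀ x : E1, x ∈ V ↔ x ^ q' ^ u = x := fun x => Iff.rfl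
  have halg : ∀ c : Fq, algebraMap Fq E1 c ∈ V := by
    intro c
    rw [hmemV, ← map_pow, FiniteField.pow_card_pow]
  let χ : Fq →+* ↥V :=
    { toFun := fun c => ⟨algebraMap Fq E1 c, halg c⟩
      map_one' := by ext; simp
      map_mul' := fun a b => by ext; simp
      map_zero' := by ext; simp
      map_add' := fun a b => by ext; simp }
  letI : Algebra Fq ↥V := χ.toAlgebra
  haveI : Fintype ↥V := Fintype.ofFinite _
  haveI : Fintype E2 := Fintype.ofFinite _
  have hVc : Fintype.card ↥V = q' ^ u := by
    rw [← Nat.card_eq_fintype_card, ← hVcard]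
    exact Nat.card_congr (Equiv.subtypeEquivRight (fun x => Iff.rfl))
  have hE2c : Fintype.card E2 = q' ^ u := by
    rw [Module.card_eq_pow_finrank (K := Fq), hE2]
  haveI hsp1 : IsSplittingField Fq ↥V ((X : Fq[X]) ^ (q' ^ u) - X) :=
    hVc ▸ FiniteField.isSplittingField_sub (↥V) Fq
  haveI hsp2 : IsSplittingField Fq E2 ((X : Fq[X]) ^ (q' ^ u) - X) :=
    hE2c ▸ FiniteField.isSplittingField_sub E2 Fq
  let e : E2 ≃ₐ[Fq] ↥V :=
    (IsSplittingField.algEquiv E2 ((X : Fq[X]) ^ (q' ^ u) - X)).trans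
      (IsSplittingField.algEquiv (↥V) ((X : Fq[X]) ^ (q' ^ u) - X)).symm
  -- the `Fq`-linear inclusion of `V` into `E1`
  let ι : ↥V →ₗ[Fq] E1 :=
    { toFun := Subtype.val
      map_add' := fun _ _ => rfl
      map_smul' := fun c x => by
        rw [RingHom.id_apply, Algebra.smul_def, Algebra.smul_def]
        rfl }
  have hιinj : Function.Injective ι := Subtype.val_injective
  let ζ : E2 →ₗ[Fq] E1 := ι.comp e.toLinearMap
  have hζinj : Function.Injective ζ := by
    intro a b hab
    exact e.injective (hιinj hab)
  have hζpow : ∀ (x : E2) (m : ℕ), ζ (x ^ m) = (ζ x) ^ m := by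
    intro x m
    show ((e (x ^ m) : ↥V) : E1) = ((e x : ↥V) : E1) ^ m
    rw [map_pow]
    rfl
  have htransport : ∀ x : E2,
      Module.finrank Fq (Submodule.span Fq
        (Set.range fun i : Fin u => (ζ x) ^ q' ^ (i : ℕ)))
      = Module.finrank Fq (Submodule.span Fq
        (Set.range fun i : Fin u => x ^ q' ^ (i : ℕ))) := by
    intro x
    have hmap : Submodule.map ζ (Submodule.span Fq
        (Set.range fun i : Fin u => x ^ q' ^ (i : ℕ)))
        = Submodule.span Fq (Set.range fun i : Fin u => (ζ x) ^ q' ^ (i : ℕ)) := by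
      rw [Submodule.map_span, ← Set.range_comp]
      congr 1
      refine congrArg _ (funext fun i => ?_)
      exact hζpow x _
    rw [← hmap]
    exact (LinearEquiv.finrank_eq (Submodule.equivMapOfInjective ζ hζinj _)).symm
  have hfix : ∀ x : E2, (ζ x) ^ q' ^ u = ζ x := fun x => (e x).2
  let g : {α : E2 // Module.finrank Fq (Submodule.span Fq
        (Set.range fun i : Fin u => α ^ q' ^ (i : ℕ))) = u}
      → {β : E1 // β ^ q' ^ u = β ∧ Module.finrank Fq (Submodule.span Fq
        (Set.range fun i : Fin u => β ^ q' ^ (i : ℕ))) = u} :=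
    fun a => ⟨ζ a.1, hfix a.1, by rw [htransport a.1]; exact a.2⟩
  have hgbij : Function.Bijective g := by
    constructor
    · intro a b hab
      have h2 := Subtype.ext_iff.mp hab
      exact Subtype.ext (hζinj h2)
    · rintro ⟨β, hβ1, hβ2⟩
      refine ⟨⟨e.symm ⟨β, hβ1⟩, ?_⟩, ?_⟩
      · have hζval : ζ (e.symm ⟨β, hβ1⟩) = β := by
          show ((e (e.symm ⟨β, hβ1⟩) : ↥V) : E1) = β
          rw [AlgEquiv.apply_symm_apply]
        rw [← htransport, hζval]
        exact hβ2
      · apply Subtype.ext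
        show ζ (e.symm ⟨β, hβ1⟩) = β
        show ((e (e.symm ⟨β, hβ1⟩) : ↥V) : E1) = β
        rw [AlgEquiv.apply_symm_apply]
  exact (Nat.card_congr (Equiv.ofBijective g hgbij)).symm

end KNormalAux


open KNormalAux

/-- **Density of `k`-normal elements along the arithmetic progression `p^t u`.**
Let `q` be a prime power of characteristic `p`, `k ≥ 1`, `u ≥ 1`, and set
`t = ⌊log_p k⌋ + 1` and `n = p^t u`.  If `E1 = F_{q^n}` and `E2 = F_{q^u}`,
then the density of `k`-normal elements of `E1` over `F_q` is at least the
density of normal elements of `E2` over `F_q` divided by `q^k`. -/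
theorem density_k_normal_ge
    (q p k u : ℕ) (hp : p.Prime) (hq : ∃ m : ℕ, 0 < m ∧ q = p ^ m)
    (hk : 1 ≤ k) (hu : 1 ≤ u)
    (Fq : Type) [Field Fq] [Fintype Fq] (hcard : Fintype.card Fq = q) [CharP Fq p]
    (E1 : Type) [Field E1] [Algebra Fq E1]
    (hE1 : Module.finrank Fq E1 = p ^ (Nat.log p k + 1) * u)
    (E2 : Type) [Field E2] [Algebra Fq E2]
    (hE2 : Module.finrank Fq E2 = u) :
    (Nat.card {α : E1 | Module.finrank Fq
          (Submodule.span Fq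
            (Set.range fun i : Fin (p ^ (Nat.log p k + 1) * u) => α ^ q ^ (i : ℕ)))
          = p ^ (Nat.log p k + 1) * u - k} : ℝ) / q ^ (p ^ (Nat.log p k + 1) * u)
      ≥ ((Nat.card {α : E2 | Module.finrank Fq
            (Submodule.span Fq (Set.range fun i : Fin u => α ^ q ^ (i : ℕ)))
            = u} : ℝ) / q ^ u) / q ^ k := by
  classical
  subst hcard
  haveI : Fact p.Prime := ⟨hp⟩
  set t := Nat.log p k + 1 with ht
  set n := p ^ t * u with hn
  set q' := Fintype.card Fq with hq'
  have hq1 : 1 < q' := Fintype.one_lt_card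
  have hkpt : k < p ^ t := by rw [ht]; exact Nat.lt_pow_succ_log_self hp.one_lt k
  have hpt1 : 1 ≤ p ^ t := Nat.one_le_iff_ne_zero.mpr (pow_ne_zero t hp.pos.ne')
  have hu0 : 0 < u := hu
  have hn0 : 0 < n := by rw [hn]; exact Nat.mul_pos (pow_pos hp.pos t) hu0
  have hukn : u + k ≤ n := by
    have h1 : (k + 1) * u ≤ p ^ t * u := Nat.mul_le_mul_right u hkpt
    have h2 : k * 1 ≤ k * u := Nat.mul_le_mul_left k hu
    have h3 : (k + 1) * u = k * u + u := by ring
    omega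
  haveI : Module.Finite Fq E1 := Module.finite_of_finrank_pos (by rw [hE1]; exact hn0)
  haveI : Module.Finite Fq E2 := Module.finite_of_finrank_pos (by rw [hE2]; exact hu0)
  haveI : Finite E1 := Module.finite_iff_finite.mp ‹_›
  haveI : Finite E2 := Module.finite_iff_finite.mp ‹_›
  have hE1n : Module.finrank Fq E1 = n := hE1
  -- polynomial setup
  set XU : Fq[X] := X ^ u - 1 with hXU
  have hXUm : XU.Monic := by
    have := monic_X_pow_sub_C (1 : Fq) hu0.ne'
    rwa [map_one] at this
  have hXUne : XU ≠ 0 := hXUm.ne_zero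
  have hXUdeg : XU.natDegree = u := by
    have := natDegree_X_pow_sub_C (n := u) (r := (1 : Fq))
    rwa [map_one] at this
  have hXm1deg : (X - 1 : Fq[X]).natDegree = 1 := by
    have := natDegree_X_pow_sub_C (n := 1) (r := (1 : Fq))
    rwa [map_one, pow_one] at this
  have hXm1ne : (X - 1 : Fq[X]) ≠ 0 := by
    intro h
    rw [h, natDegree_zero] at hXm1deg
    omega
  have hXn : XU ^ (p ^ t) = X ^ n - 1 := by
    rw [hXU, sub_pow_char_pow, one_pow, ← pow_mul, Nat.mul_comm u (p ^ t), ← hn]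
  have hdvd1 : (X - 1 : Fq[X]) ∣ XU := by
    have := sub_dvd_pow_sub_pow (X : Fq[X]) 1 u
    rwa [one_pow] at this
  have hdvd2 : ((X - 1 : Fq[X])) ^ k ∣ XU ^ (p ^ t - 1) :=
    dvd_trans (pow_dvd_pow_of_dvd hdvd1 k) (pow_dvd_pow XU (by omega))
  obtain ⟨S, hS⟩ := hdvd2
  have hXkne : ((X - 1 : Fq[X])) ^ k ≠ 0 := pow_ne_zero k hXm1ne
  have hSne : S ≠ 0 := by
    intro h
    rw [h, mul_zero] at hS
    exact (pow_ne_zero _ hXUne) hS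
  have hSdeg : k + S.natDegree = (p ^ t - 1) * u := by
    have h1 : (XU ^ (p ^ t - 1)).natDegree = (p ^ t - 1) * u := by
      rw [natDegree_pow, hXUdeg]
    rw [hS, natDegree_mul hXkne hSne, natDegree_pow, hXm1deg, mul_one] at h1
    omega
  have hmulu : (p ^ t - 1) * u = p ^ t * u - u := by
    rw [Nat.sub_mul, one_mul]
  set T0 : Fq[X] := XU * S with hT0
  have hT0ne : T0 ≠ 0 := mul_ne_zero hXUne hSne
  have hT0Xn : T0 * (X - 1 : Fq[X]) ^ k = X ^ n - 1 := by
    calc T0 * (X - 1 : Fq[X]) ^ k = XU * ((X - 1 : Fq[X]) ^ k * S) := by rw [hT0]; ring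
      _ = XU * XU ^ (p ^ t - 1) := by rw [← hS]
      _ = XU ^ (p ^ t) := by
          rw [← pow_succ']
          congr 1
          omega
      _ = X ^ n - 1 := hXn
  have hT0deg : T0.natDegree = n - k := by
    rw [hT0, natDegree_mul hXUne hSne, hXUdeg, hn]
    omega
  have hSXn : S.natDegree = n - u - k := by
    rw [hn]
    omega
  have hprime : ∀ π : Fq[X], Prime π → π ∣ S → π ∣ XU := by
    intro π hπ hd
    exact hπ.dvd_of_dvd_pow (show π ∣ XU ^ (p ^ t - 1) by rw [hS]; exact hd.mul_left _)
  -- kernels in E1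
  have hK0rank : Module.finrank Fq (LinearMap.ker (aeval (frobL Fq E1) T0)) = n - k :=
    (finrank_ker_aeval_eq (E := E1) hE1n hT0ne hXkne hT0Xn).trans hT0deg
  have hVrank : Module.finrank Fq (LinearMap.ker (aeval (frobL Fq E1) XU)) = u := by
    have hXW : XU * (S * (X - 1 : Fq[X]) ^ k) = X ^ n - 1 := by rw [← hT0Xn, hT0]; ring
    exact (finrank_ker_aeval_eq (E := E1) hE1n hXUne (mul_ne_zero hSne hXkne) hXW).trans hXUdeg
  have hSrank : Module.finrank Fq (LinearMap.ker (aeval (frobL Fq E1) S)) = n - u - k := by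
    have hSW : S * (XU * (X - 1 : Fq[X]) ^ k) = X ^ n - 1 := by rw [← hT0Xn, hT0]; ring
    exact (finrank_ker_aeval_eq (E := E1) hE1n hSne (mul_ne_zero hXUne hXkne) hSW).trans hSXn
  have hψV : ∀ a ∈ LinearMap.ker (aeval (frobL Fq E1) T0),
      aeval (frobL Fq E1) S a ∈ LinearMap.ker (aeval (frobL Fq E1) XU) := by
    intro a ha
    rw [LinearMap.mem_ker] at ha ⊢
    rw [← Module.End.mul_apply, ← map_mul, ← hT0]
    exact ha
  set ρ := (aeval (frobL Fq E1) S).restrict hψV with hρ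
  have hkerle : LinearMap.ker (aeval (frobL Fq E1) S) ≤ LinearMap.ker (aeval (frobL Fq E1) T0) := by
    intro a ha
    rw [LinearMap.mem_ker] at ha ⊢
    rw [hT0, map_mul, Module.End.mul_apply, ha, map_zero]
  have hkerρ : Module.finrank Fq (LinearMap.ker ρ) = n - u - k := by
    rw [hρ, LinearMap.ker_restrict hψV, ← hSrank]
    exact LinearEquiv.finrank_eq (Submodule.comapSubtypeEquivOfLe hkerle)
  have hrangeρ : Module.finrank Fq (LinearMap.range ρ) = u := by
    have h1 := LinearMap.finrank_range_add_finrank_ker ρ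
    rw [hkerρ, hK0rank] at h1
    omega
  have hsurj : Function.Surjective ρ := by
    rw [← LinearMap.range_eq_top]
    exact Submodule.eq_top_of_finrank_eq (by rw [hrangeρ, hVrank])
  -- membership translation
  have hVmem : ∀ β : E1, β ∈ LinearMap.ker (aeval (frobL Fq E1) XU) ↔ β ^ q' ^ u = β := by
    intro β
    rw [LinearMap.mem_ker, hXU, map_sub, map_pow, aeval_X, map_one, LinearMap.sub_apply,
      Module.End.one_apply, frobL_pow, sub_eq_zero]
  -- the sets A and B
  let A := {a : E1 // aeval (frobL Fq E1) T0 a = 0 ∧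
    Module.finrank Fq (Submodule.span Fq
      (Set.range fun i : Fin u => (aeval (frobL Fq E1) S a) ^ q' ^ (i : ℕ))) = u}
  let B := {β : E1 // β ^ q' ^ u = β ∧
    Module.finrank Fq (Submodule.span Fq
      (Set.range fun i : Fin u => β ^ q' ^ (i : ℕ))) = u}
  let f : A → B := fun a => ⟨aeval (frobL Fq E1) S a.1,
    (hVmem _).mp (hψV a.1 (LinearMap.mem_ker.mpr a.2.1)), a.2.2⟩
  have hfib : ∀ b : B, Nat.card {a : A // f a = b} = q' ^ (n - u - k) := by
    intro b
    have hbV : b.1 ∈ LinearMap.ker (aeval (frobL Fq E1) XU) := (hVmem b.1).mpr b.2.1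
    obtain ⟨w0, hw0⟩ := hsurj ⟨b.1, hbV⟩
    have hz0T : aeval (frobL Fq E1) T0 w0.1 = 0 := LinearMap.mem_ker.mp w0.2
    have hz0S : aeval (frobL Fq E1) S w0.1 = b.1 := congrArg Subtype.val hw0
    have hfibequiv : {a : {a : E1 // aeval (frobL Fq E1) T0 a = 0 ∧
        Module.finrank Fq (Submodule.span Fq
          (Set.range fun i : Fin u => (aeval (frobL Fq E1) S a) ^ q' ^ (i : ℕ))) = u} // f a = b}
        ≃ {y : E1 // aeval (frobL Fq E1) S y = 0} :=
      { toFun := fun a => ⟨a.1.1 - w0.1, by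
          have haS : aeval (frobL Fq E1) S a.1.1 = b.1 := Subtype.ext_iff.mp a.2
          rw [map_sub, haS, hz0S, sub_self]⟩
        invFun := fun y => ⟨⟨y.1 + w0.1, by
            constructor
            · rw [map_add, hz0T, add_zero, hT0, map_mul, Module.End.mul_apply, y.2, map_zero]
            · rw [map_add, y.2, zero_add, hz0S]
              exact b.2.2⟩,
          by
            apply Subtype.ext
            show aeval (frobL Fq E1) S (y.1 + w0.1) = b.1
            rw [map_add, y.2, zero_add, hz0S]⟩
        left_inv := fun a => by
          apply Subtype.ext
          apply Subtype.ext
          show a.1.1 - w0.1 + w0.1 = a.1.1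
          exact sub_add_cancel _ _
        right_inv := fun y => by
          apply Subtype.ext
          show y.1 + w0.1 - w0.1 = y.1
          exact add_sub_cancel_right _ _ }
    rw [Nat.card_congr hfibequiv]
    have hker : Nat.card {y : E1 // aeval (frobL Fq E1) S y = 0}
        = Nat.card (LinearMap.ker (aeval (frobL Fq E1) S)) :=
      Nat.card_congr (Equiv.subtypeEquivRight (fun y => (LinearMap.mem_ker).symm))
    rw [hker, natcard_eq_pow_finrank (Fq := Fq)
      (V := ↥(LinearMap.ker (aeval (frobL Fq E1) S))), hSrank]
  have hcount : Nat.card A = q' ^ (n - u - k) * Nat.card B := card_eq_of_fibers f _ hfib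
  -- injection of A into the k-normal set
  have hmemA : ∀ a : A, Module.finrank Fq (Submodule.span Fq
      (Set.range fun i : Fin n => a.1 ^ q' ^ (i : ℕ))) = n - k := by
    intro a
    rw [span_conj_eq_range (E := E1) hE1n hn0 a.1]
    have hβ := ann_degree_ge_of_finrank (E := E1) (x := aeval (frobL Fq E1) S a.1) a.2.2
    have hfr := finrank_range_eq_of_fiber (E := E1) hXUne hSne hprime
      (show aeval (frobL Fq E1) (XU * S) a.1 = 0 from a.2.1)
      (fun w hw hwx => by rw [hXUdeg]; exact hβ w hw hwx)
    rw [hfr, ← hT0, hT0deg]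
  let ι2 : A → {α : E1 | Module.finrank Fq (Submodule.span Fq
      (Set.range fun i : Fin n => α ^ q' ^ (i : ℕ))) = n - k} := fun a => ⟨a.1, hmemA a⟩
  have hι2 : Function.Injective ι2 := by
    intro a b hab
    have h2 := Subtype.ext_iff.mp hab
    exact Subtype.ext h2
  have hNineq : Nat.card A ≤ Nat.card {α : E1 | Module.finrank Fq (Submodule.span Fq
      (Set.range fun i : Fin n => α ^ q' ^ (i : ℕ))) = n - k} :=
    Nat.card_le_card_of_injective ι2 hι2
  -- transport B to E2
  have hVcard : Nat.card {x : E1 // x ^ q' ^ u = x} = q' ^ u := by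
    have h1 : Nat.card {x : E1 // x ^ q' ^ u = x}
        = Nat.card (LinearMap.ker (aeval (frobL Fq E1) XU)) :=
      Nat.card_congr (Equiv.subtypeEquivRight (fun x => (hVmem x).symm))
    rw [h1, natcard_eq_pow_finrank (Fq := Fq)
      (V := ↥(LinearMap.ker (aeval (frobL Fq E1) XU))), hVrank]
  have htrans := natcard_normal_transport (Fq := Fq) E1 E2 hE2 hVcard
  have hBE2 : Nat.card B = Nat.card {α : E2 | Module.finrank Fq (Submodule.span Fq
      (Set.range fun i : Fin u => α ^ q' ^ (i : ℕ))) = u} := by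
    rw [htrans]
    exact Nat.card_congr (Equiv.subtypeEquivRight (fun α => Iff.rfl))
  -- final arithmetic
  set N1 := Nat.card {α : E1 | Module.finrank Fq (Submodule.span Fq
      (Set.range fun i : Fin n => α ^ q' ^ (i : ℕ))) = n - k} with hN1
  set N2 := Nat.card {α : E2 | Module.finrank Fq (Submodule.span Fq
      (Set.range fun i : Fin u => α ^ q' ^ (i : ℕ))) = u} with hN2
  have hq0R : (0 : ℝ) < (q' : ℝ) := by
    exact_mod_cast Nat.lt_of_lt_of_le Nat.zero_lt_one hq1.le
  have hkey : N2 * q' ^ n ≤ N1 * (q' ^ u * q' ^ k) := by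
    have hexp : q' ^ (n - u - k) * (q' ^ u * q' ^ k) = q' ^ n := by
      rw [← pow_add, ← pow_add]
      congr 1
      omega
    have hAB : q' ^ (n - u - k) * Nat.card B ≤ N1 := by
      rw [← hcount]
      exact hNineq
    calc N2 * q' ^ n = (q' ^ (n - u - k) * N2) * (q' ^ u * q' ^ k) := by
          rw [← hexp]; ring
      _ ≤ N1 * (q' ^ u * q' ^ k) := by
          refine Nat.mul_le_mul_right _ ?_
          rw [← hBE2]
          exact hAB
  rw [ge_iff_le, div_div, div_le_div_iff₀ (by positivity) (by positivity)]
  exact_mod_cast hkey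
end
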